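/- For real σ with 1 < σ ≤ 1.06, the Riemann zeta function satisfies ζ(σ) ≤ 0.6 + 1/(σ-1). -/

import Mathlib

open Real MeasureTheory Set

-- Tangent line inequality via weighted AM-GM
lemma tangent_ineq {σ t : ℝ} (hσ : 0 < σ) (ht : 0 < t) :
    1 - σ * (t - 1) ≤ t ^ (-σ) := by
  have hw : (1/(1+σ)) + (σ/(1+σ)) = 1 := by field_simp
  have h := Real.geom_mean_le_arith_mean2_weighted
    (by positivity : (0:ℝ) ≤ 1/(1+σ)) (by positivity : (0:ℝ) ≤ σ/(1+σ))
    (Real.rpow_nonneg ht.le (-σ)) ht.le hw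
  have hL : (t ^ (-σ)) ^ (1/(1+σ)) * t ^ (σ/(1+σ)) = 1 := by
    rw [← Real.rpow_mul ht.le, ← Real.rpow_one t]
    rw [Real.rpow_one t, ← Real.rpow_add ht]
    rw [show -σ * (1/(1+σ)) + σ/(1+σ) = 0 by field_simp; ring]
    exact Real.rpow_zero t
  rw [hL] at h
  have h1σ : (0:ℝ) < 1 + σ := by linarith
  have := mul_le_mul_of_nonneg_left h h1σ.le
  rw [mul_add] at this
  have e1 : (1+σ) * (1/(1+σ) * t ^ (-σ)) = t ^ (-σ) := by field_simp
  have e2 : (1+σ) * (σ/(1+σ) * t) = σ * t := by field_simp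
  rw [e1, e2, mul_one] at this
  linarith

-- scaled tangent line
lemma tangent_scaled {σ a u : ℝ} (hσ : 0 < σ) (ha : 0 < a) (hu : 0 < u) :
    a ^ (-σ) - σ * a ^ (-σ) / a * (u - a) ≤ u ^ (-σ) := by
  have ht : 0 < u / a := div_pos hu ha
  have key := tangent_ineq hσ ht
  have hmul : a ^ (-σ) * (u/a) ^ (-σ) = u ^ (-σ) := by
    rw [← Real.mul_rpow ha.le ht.le, mul_div_cancel₀ _ ha.ne']
  have hpos : (0:ℝ) ≤ a ^ (-σ) := Real.rpow_nonneg ha.le _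
  have := mul_le_mul_of_nonneg_left key hpos
  rw [hmul] at this
  have expand : a ^ (-σ) * (1 - σ * (u/a - 1)) =
      a ^ (-σ) - σ * a ^ (-σ) / a * (u - a) := by
    field_simp
  linarith [expand ▸ this]

lemma step_ineq {σ : ℝ} (hσ : 0 < σ) {a : ℝ} (ha : 2 ≤ a) :
    a ^ (-σ) ≤ ∫ u in (a - 1/2)..(a + 1/2), u ^ (-σ) := by
  have ha0 : (0:ℝ) < a := by linarith
  have hle : a - 1/2 ≤ a + 1/2 := by linarith
  have hint_lin : IntervalIntegrable (fun u => a ^ (-σ) - σ * a ^ (-σ) / a * (u - a))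
      volume (a - 1/2) (a + 1/2) := by
    apply IntervalIntegrable.sub intervalIntegrable_const
    exact (intervalIntegral.intervalIntegrable_id.sub intervalIntegrable_const).const_mul _
  have hint_rpow : IntervalIntegrable (fun u => u ^ (-σ)) volume (a - 1/2) (a + 1/2) := by
    apply ContinuousOn.intervalIntegrable
    apply ContinuousOn.rpow_const continuousOn_id
    intro x hx
    rw [uIcc_of_le hle] at hx
    exact Or.inl (by linarith [hx.1] : x ≠ 0) 
  have hcalc : ∫ u in (a - 1/2)..(a + 1/2), (a ^ (-σ) - σ * a ^ (-σ) / a * (u - a))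
      = a ^ (-σ) := by
    rw [intervalIntegral.integral_sub intervalIntegrable_const
      ((intervalIntegral.intervalIntegrable_id.sub intervalIntegrable_const).const_mul _)]
    rw [intervalIntegral.integral_const_mul]
    rw [intervalIntegral.integral_sub intervalIntegral.intervalIntegrable_id
      intervalIntegrable_const]
    rw [integral_id, intervalIntegral.integral_const, intervalIntegral.integral_const]
    simp only [smul_eq_mul]
    ring
  rw [← hcalc]
  apply intervalIntegral.integral_mono_on hle hint_lin hint_rpow
  intro u hu
  exact tangent_scaled hσ ha0 (by linarith [hu.1] : (0:ℝ) < u)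

lemma tail_bound {σ : ℝ} (h1 : 1 < σ) :
    ∑' n : ℕ, ((n:ℝ) + 2) ^ (-σ) ≤ (3/2 : ℝ) ^ (1 - σ) / (σ - 1) := by
  have hσ0 : 0 < σ := by linarith
  have hexp : -σ < -1 := by linarith
  have hsum : Summable (fun n : ℕ => ((n:ℝ) + 2) ^ (-σ)) := by
    have h := Real.summable_nat_rpow.mpr hexp
    have := (summable_nat_add_iff 2).mpr h
    refine this.congr fun n => ?_
    push_cast
    ring_nf
  have hint : ∀ k : ℕ, IntervalIntegrable (fun u : ℝ => u ^ (-σ)) volume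
      (3/2 + (k:ℝ)) (3/2 + ((k:ℝ) + 1)) := by
    intro k
    apply ContinuousOn.intervalIntegrable
    apply ContinuousOn.rpow_const continuousOn_id
    intro x hx
    rw [uIcc_of_le (by linarith : (3/2:ℝ) + k ≤ 3/2 + ((k:ℝ)+1))] at hx
    have : (0:ℝ) ≤ (k:ℝ) := Nat.cast_nonneg k
    exact Or.inl (by nlinarith [hx.1] : x ≠ 0)
  have hIoi : IntegrableOn (fun u : ℝ => u ^ (-σ)) (Ioi (3/2 : ℝ)) :=
    integrableOn_Ioi_rpow_of_lt hexp (by norm_num)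
  have hIoiVal : ∫ u in Ioi (3/2 : ℝ), u ^ (-σ) = (3/2 : ℝ) ^ (1 - σ) / (σ - 1) := by
    rw [integral_Ioi_rpow_of_lt hexp (by norm_num)]
    rw [show -σ + 1 = 1 - σ by ring]
    rw [div_eq_div_iff (by linarith) (by linarith)]
    ring
  rw [← hIoiVal]
  apply Summable.tsum_le_of_sum_le hsum
  intro s
  obtain ⟨N, hN⟩ := s.exists_nat_subset_range
  calc ∑ n ∈ s, ((n:ℝ) + 2) ^ (-σ)
      ≤ ∑ n ∈ Finset.range N, ((n:ℝ) + 2) ^ (-σ) := by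
        apply Finset.sum_le_sum_of_subset_of_nonneg hN
        intro i _ _
        exact Real.rpow_nonneg (by positivity) _
    _ ≤ ∑ n ∈ Finset.range N, ∫ u in (3/2 + (n:ℝ))..(3/2 + ((n:ℝ)+1)), u ^ (-σ) := by
        apply Finset.sum_le_sum
        intro n _
        have := step_ineq hσ0 (by push_cast; linarith [Nat.cast_nonneg (α := ℝ) n] : 2 ≤ (n:ℝ) + 2)
        rw [show (3/2:ℝ) + n = n + 2 - 1/2 by ring, show (3/2:ℝ) + (n+1) = n + 2 + 1/2 by ring]
        exact this
    _ = ∫ u in (3/2 : ℝ)..(3/2 + (N:ℝ)), u ^ (-σ) := by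
        have := intervalIntegral.sum_integral_adjacent_intervals
          (a := fun k : ℕ => 3/2 + (k:ℝ)) (n := N)
          (f := fun u : ℝ => u ^ (-σ)) (μ := volume) (fun k _ => by
            have := hint k
            convert this using 2
            push_cast; ring)
        convert this using 2 <;> push_cast <;> ring
    _ ≤ ∫ u in Ioi (3/2 : ℝ), u ^ (-σ) := by
        rw [intervalIntegral.integral_of_le (by linarith [Nat.cast_nonneg (α := ℝ) N])]
        apply setIntegral_mono_set hIoi
        · filter_upwards [ae_restrict_mem measurableSet_Ioi] with x hx
          exact Real.rpow_nonneg (by linarith [mem_Ioi.mp hx] : (0:ℝ) ≤ x) _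
        · exact (Ioc_subset_Ioi_self).eventuallyLE

lemma numeric_bound {s : ℝ} (hs0 : 0 < s) (hs : s ≤ 0.06) :
    (2/3 : ℝ) ^ s ≤ 1 - 0.4 * s := by
  set t := s / 0.06 with ht
  have ht0 : 0 ≤ t := by positivity
  have ht1 : t ≤ 1 := by rw [ht]; rw [div_le_one (by norm_num)]; linarith
  have hA : (2/3 : ℝ) ^ (0.06 : ℝ) ≤ 0.976 := by
    apply le_of_pow_le_pow_left₀ (n := 50) (by norm_num) (by norm_num)
    rw [← Real.rpow_natCast ((2/3 : ℝ) ^ (0.06:ℝ)) 50, ← Real.rpow_mul (by norm_num)]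
    norm_num
  have hconv := convexOn_exp.2 (mem_univ (0:ℝ)) (mem_univ (0.06 * Real.log (2/3)))
    (by linarith : (0:ℝ) ≤ 1 - t) ht0 (by ring)
  simp only [smul_eq_mul, mul_zero, zero_add, Real.exp_zero, mul_one] at hconv
  have hrw : t * (0.06 * Real.log (2/3)) = Real.log (2/3) * s := by
    rw [ht]; field_simp
  rw [hrw] at hconv
  have h06 : Real.exp (0.06 * Real.log (2/3)) = (2/3 : ℝ) ^ (0.06 : ℝ) := by
    rw [Real.rpow_def_of_pos (by norm_num)]; ring_nf
  have hS : (2/3 : ℝ) ^ s = Real.exp (Real.log (2/3) * s) :=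
    Real.rpow_def_of_pos (by norm_num) s
  rw [hS]
  calc Real.exp (Real.log (2/3) * s) ≤ (1 - t) + t * Real.exp (0.06 * Real.log (2/3)) := hconv
    _ ≤ (1 - t) + t * 0.976 := by nlinarith [h06 ▸ hA]
    _ = 1 - 0.4 * s := by rw [ht]; ring

theorem zeta_upper_bound (σ : ℝ) (h1 : 1 < σ) (h2 : σ ≤ 1.06) :
    (riemannZeta σ).re ≤ 0.6 + 1 / (σ - 1) := by
  have hσC : 1 < ((σ:ℂ)).re := by simpa using h1
  rw [zeta_eq_tsum_one_div_nat_add_one_cpow hσC]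
  have hterm : ∀ n : ℕ, (1 / ((n:ℂ) + 1) ^ (σ:ℂ)) = ((((n:ℝ) + 1) ^ (-σ) : ℝ) : ℂ) := by
    intro n
    have h0 : (0:ℝ) ≤ (n:ℝ) + 1 := by positivity
    rw [show ((n:ℂ) + 1) = ((((n:ℝ) + 1) : ℝ) : ℂ) by push_cast; ring]
    rw [← Complex.ofReal_cpow h0]
    rw [Real.rpow_neg h0]
    push_cast
    rw [one_div]
  rw [tsum_congr hterm, ← Complex.ofReal_tsum, Complex.ofReal_re]
  -- now a real statement
  have hsum : Summable (fun n : ℕ => ((n:ℝ) + 1) ^ (-σ)) := by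
    have h := Real.summable_nat_rpow.mpr (by linarith : -σ < -1)
    have := (summable_nat_add_iff 1).mpr h
    refine this.congr fun n => ?_
    push_cast
    ring_nf
  rw [Summable.tsum_eq_zero_add hsum]
  have h0term : ((0:ℕ):ℝ) + 1 = 1 := by norm_num
  have hfirst : (((0:ℕ):ℝ) + 1) ^ (-σ) = 1 := by rw [h0term, Real.one_rpow]
  rw [hfirst]
  have htail : ∑' n : ℕ, (((n:ℕ):ℝ) + 1 + 1) ^ (-σ) ≤ (3/2 : ℝ) ^ (1 - σ) / (σ - 1) := by
    have := tail_bound h1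
    refine le_of_eq_of_le (tsum_congr fun n => ?_) this
    push_cast
    ring_nf
  have hnum : (3/2 : ℝ) ^ (1 - σ) ≤ 1 - 0.4 * (σ - 1) := by
    have : (3/2 : ℝ) ^ (1 - σ) = (2/3 : ℝ) ^ (σ - 1) := by
      rw [show (2/3 : ℝ) = (3/2 : ℝ)⁻¹ by norm_num,
        Real.inv_rpow (by norm_num), ← Real.rpow_neg (by norm_num)]
      ring_nf
    rw [this]
    exact numeric_bound (by linarith) (by linarith)
  have hs : (0:ℝ) < σ - 1 := by linarith
  have hT : ∑' n : ℕ, (((n + 1 : ℕ):ℝ) + 1) ^ (-σ) ≤ (3/2 : ℝ) ^ (1 - σ) / (σ - 1) := by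
    refine le_of_eq_of_le (tsum_congr fun n => ?_) htail
    push_cast
    ring_nf
  have hdiv : (3/2 : ℝ) ^ (1 - σ) / (σ - 1) ≤ (1 - 0.4 * (σ - 1)) / (σ - 1) := by gcongr
  have hfin : (1 - 0.4 * (σ - 1)) / (σ - 1) = 1 / (σ - 1) - 0.4 := by
    field_simp
  linarith
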